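/- If A = [a_1,…,a_n] and B = [b_1,…,b_m] are adjoint chains of a columnar fiber (i.e. adjacent chains in a fiber A_n + … + A_1 + C + B_1 + … + B_m with C the unique (−1)-curve), then e(A) + e(B) = 1 and d(A) = d(B) = μ(C), where μ(C) is the multiplicity of C in the fiber. -/
import Mathlib


/-- `d([a₁,…,aₙ])`: determinant of the negative intersection matrix of a
rational chain, via the recursion `d([a₁,…,aₙ]) = a₁ d([a₂,…,aₙ]) − d([a₃,…,aₙ])`. -/
def chainDet : List ℤ → ℤ
  | [] => 1
  | [a] => a
  | a :: b :: l => a * chainDet (b :: l) - chainDet l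

/-- `e(T) = d(T − T₁)/d(T)` for a chain `T`. -/
def eChain (l : List ℤ) : ℚ := (chainDet l.tail : ℚ) / chainDet l

/-- `Adjoint A B p q` says that `A` and `B` are the adjoint chains of a
columnar fiber `Aₙ + … + A₁ + C + B₁ + … + Bₘ` of a `ℙ¹`-ruling (produced
from a smooth 0-curve by the Euclidean blowup algorithm: the fiber `[2,1,2]`
followed by repeated blowups at `C ∩ A₁` or `C ∩ B₁`), where the lists
record the numbers `−Aᵢ²` resp. `−Bᵢ²` starting from the components adjacent
to the unique `(−1)`-curve `C`, and `p = μ(A₁)`, `q = μ(B₁)` are the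
multiplicities of the adjacent components, so that `μ(C) = p + q`. -/
inductive Adjoint : List ℤ → List ℤ → ℤ → ℤ → Prop
  | base : Adjoint [2] [2] 1 1
  | left (a : ℤ) (A B : List ℤ) (p q : ℤ) :
      Adjoint (a :: A) B p q → Adjoint ((a + 1) :: A) (2 :: B) p (p + q)
  | right (b : ℤ) (A B : List ℤ) (p q : ℤ) :
      Adjoint A (b :: B) p q → Adjoint (2 :: A) ((b + 1) :: B) (p + q) q

lemma adjoint_key : ∀ (A B : List ℤ) (p q : ℤ), Adjoint A B p q →
    chainDet A = p + q ∧ chainDet B = p + q ∧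
    chainDet A.tail = p ∧ chainDet B.tail = q ∧ 1 ≤ p ∧ 1 ≤ q := by
  intro A B p q h
  induction h with
  | base => simp [chainDet]
  | left a A B p q h ih =>
    obtain ⟨hA, hB, hAt, hBt, hp, hq⟩ := ih
    have hBne : B ≠ [] := by
      rintro rfl
      simp [chainDet] at hB hBt
      omega
    obtain ⟨b, B', rfl⟩ : ∃ b B', B = b :: B' := by
      cases B with
      | nil => exact absurd rfl hBne
      | cons b B' => exact ⟨b, B', rfl⟩
    cases A with
    | nil =>
      simp [chainDet] at hA hAt hBt ⊢
      refine ⟨by omega, by omega, by omega, by omega, by omega⟩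
    | cons c l =>
      simp [chainDet] at hA hAt hBt ⊢
      refine ⟨by nlinarith [hA, hAt], by nlinarith, by omega, by omega, by omega⟩
  | right b A B p q h ih =>
    obtain ⟨hA, hB, hAt, hBt, hp, hq⟩ := ih
    have hAne : A ≠ [] := by
      rintro rfl
      simp [chainDet] at hA hAt
      omega
    obtain ⟨a, A', rfl⟩ : ∃ a A', A = a :: A' := by
      cases A with
      | nil => exact absurd rfl hAne
      | cons a A' => exact ⟨a, A', rfl⟩
    cases B with
    | nil =>
      simp [chainDet] at hB hBt hAt ⊢
      refine ⟨by omega, by omega, by omega, by omega, by omega⟩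
    | cons c l =>
      simp [chainDet] at hB hBt hAt ⊢
      refine ⟨by nlinarith, by nlinarith, by omega, by omega, by omega⟩

/-- For adjoint chains `A`, `B` of a columnar fiber with unique `(−1)`-curve
`C` of multiplicity `μ(C)`: `e(A) + e(B) = 1` and `d(A) = d(B) = μ(C)`. -/
theorem adjoint_chains (A B : List ℤ) (p q : ℤ) (h : Adjoint A B p q) :
    eChain A + eChain B = 1 ∧ chainDet A = chainDet B ∧ chainDet A = p + q := by
  obtain ⟨hA, hB, hAt, hBt, hp, hq⟩ := adjoint_key A B p q h
  refine ⟨?_, by omega, by omega⟩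
  unfold eChain
  rw [hA, hB, hAt, hBt]
  have hpq : ((p : ℚ) + q) ≠ 0 := by
    have : (1:ℚ) ≤ p := by exact_mod_cast hp
    have : (1:ℚ) ≤ q := by exact_mod_cast hq
    nlinarith
  push_cast
  field_simp
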